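/- Let F : ℝ^m × ℝ^n → ℝ^p be a smooth Euclidean FCRE with constant c and constant rank r, let F(x₀, y₀) = c, and let H be the least-squares solution map at (x₀, y₀). Then the derivative DH(x₀) : ℝ^m → ℝ^n is the unique linear map M satisfying both ∂F/∂y(x₀, y₀) ∘ M = −∂F/∂x(x₀, y₀) and range(M) ⊆ (ker ∂F/∂y(x₀, y₀))^⊥ (orthogonal complement with respect to the Euclidean inner product). In particular, such a linear map M exists and is unique. -/

import Mathlib

open Filter Topology Module

/-- The rank of a continuous linear map between real normed spaces. -/
noncomputable def clmRank {E F : Type*} [NormedAddCommGroup E] [NormedSpace ℝ E]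
    [NormedAddCommGroup F] [NormedSpace ℝ F] (f : E →L[ℝ] F) : ℕ :=
  Module.finrank ℝ (LinearMap.range (f : E →ₗ[ℝ] F))

lemma aux2 {E : Type*} [NormedAddCommGroup E] [NormedSpace ℝ E] {γ₁ γ₂ : ℝ → E} {w₁ w₂ : E}
    {y₀ : E} (h₁ : HasDerivAt γ₁ w₁ 0) (h₂ : HasDerivAt γ₂ w₂ 0)
    (e₁ : γ₁ 0 = y₀) (e₂ : γ₂ 0 = y₀)
    (hle : ∀ᶠ t in 𝓝 (0:ℝ), ‖γ₁ t - y₀‖ ≤ ‖γ₂ t - y₀‖) : ‖w₁‖ ≤ ‖w₂‖ := by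
  have t₁ : Tendsto (fun t => ‖slope γ₁ 0 t‖) (𝓝[≠] 0) (𝓝 ‖w₁‖) :=
    (continuous_norm.tendsto _).comp (hasDerivAt_iff_tendsto_slope.mp h₁)
  have t₂ : Tendsto (fun t => ‖slope γ₂ 0 t‖) (𝓝[≠] 0) (𝓝 ‖w₂‖) :=
    (continuous_norm.tendsto _).comp (hasDerivAt_iff_tendsto_slope.mp h₂)
  refine le_of_tendsto_of_tendsto t₁ t₂ ?_
  filter_upwards [self_mem_nhdsWithin, nhdsWithin_le_nhds hle] with t ht hle'
  simp only [slope_def_module, e₁, e₂, norm_smul]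
  gcongr

lemma aux1 {E G α : Type*} [NormedAddCommGroup E] [NormedSpace ℝ E] [FiniteDimensional ℝ E]
    [NormedAddCommGroup G] [InnerProductSpace ℝ G] [FiniteDimensional ℝ G]
    [TopologicalSpace α] (D : α → E →L[ℝ] G) (hD : Continuous D) (r : ℕ)
    (hr : ∀ a, Module.finrank ℝ (LinearMap.range (D a : E →ₗ[ℝ] G)) = r) (a₀ : α) :
    ∀ᶠ a in 𝓝 a₀, ∀ ξ,
      Submodule.orthogonalProjectionOnto (LinearMap.range (D a₀ : E →ₗ[ℝ] G)) (D a ξ) = 0 → D a ξ = 0 := by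
  have hr' : ∀ a, finrank ℝ (LinearMap.range ((D a : E →ₗ[ℝ] G))) = r := by
    intro a; rw [← hr a]
  set R := LinearMap.range (D a₀ : E →ₗ[ℝ] G) with hR
  set P : G →L[ℝ] G := R.subtypeL.comp (Submodule.orthogonalProjectionOnto R) with hP
  set T : α → E →L[ℝ] G := fun a => P.comp (D a) with hT
  have hTc : Continuous T := by
    have : T = fun a => (ContinuousLinearMap.compSL E G G (RingHom.id ℝ) (RingHom.id ℝ) P) (D a) := rfl
    rw [this]
    exact ((ContinuousLinearMap.compSL E G G (RingHom.id ℝ) (RingHom.id ℝ) P).continuous).comp hD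
  have hmem : T a₀ ∈ {f : E →L[ℝ] G | (r : Cardinal) ≤ LinearMap.rank (f : E →ₗ[ℝ] G)} := by
    have hTD : T a₀ = D a₀ := by
      ext ξ
      show R.subtypeL ((Submodule.orthogonalProjectionOnto R) ((D a₀) ξ)) = (D a₀) ξ
      exact Submodule.starProjection_eq_self_iff.mpr (LinearMap.mem_range_self _ ξ)
    rw [Set.mem_setOf_eq, hTD, LinearMap.rank, ← Module.finrank_eq_rank]
    exact_mod_cast (hr' a₀).ge
  have hev := hTc.continuousAt.eventually_mem ((isOpen_setOf_nat_le_rank r).mem_nhds hmem)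
  filter_upwards [hev] with a ha ξ hξ
  have hrankT : r ≤ finrank ℝ (LinearMap.range ((T a : E →ₗ[ℝ] G))) := by
    have := ha
    rw [LinearMap.rank, ← Module.finrank_eq_rank, Nat.cast_le] at this
    exact this
  have hker_le : LinearMap.ker ((D a : E →ₗ[ℝ] G)) ≤ LinearMap.ker ((T a : E →ₗ[ℝ] G)) := by
    intro x hx
    simp only [LinearMap.mem_ker] at hx ⊢
    show P ((D a) x) = 0
    rw [show ((D a : E →ₗ[ℝ] G)) x = (D a) x from rfl] at hx
    rw [hx, map_zero]
  have h1 := (D a : E →ₗ[ℝ] G).finrank_range_add_finrank_ker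
  have h2 := (T a : E →ₗ[ℝ] G).finrank_range_add_finrank_ker
  have hker_eq : LinearMap.ker ((D a : E →ₗ[ℝ] G)) = LinearMap.ker ((T a : E →ₗ[ℝ] G)) := by
    apply Submodule.eq_of_le_of_finrank_le hker_le
    have := hr' a
    omega
  have hmemker : ξ ∈ LinearMap.ker ((T a : E →ₗ[ℝ] G)) := by
    simp only [LinearMap.mem_ker]
    show P ((D a) ξ) = 0
    show R.subtypeL ((Submodule.orthogonalProjectionOnto R) ((D a) ξ)) = 0
    rw [hξ, map_zero]
  rw [← hker_eq, LinearMap.mem_ker] at hmemker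
  exact hmemker

set_option maxHeartbeats 2000000 in
/-- The derivative of the least-squares solution map of a Euclidean FCRE
is the unique linear map `M` with `∂F/∂y(x₀,y₀) ∘ M = -∂F/∂x(x₀,y₀)` whose range is
contained in the orthogonal complement of `ker ∂F/∂y(x₀,y₀)`. -/
theorem stmt1 {m n p : ℕ}
    (F : EuclideanSpace ℝ (Fin m) × EuclideanSpace ℝ (Fin n) → EuclideanSpace ℝ (Fin p))
    (c : EuclideanSpace ℝ (Fin p)) (r : ℕ)
    (hF : ContDiff ℝ ((⊤ : ℕ∞) : WithTop ℕ∞) F)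
    (hfeas : ∀ x, ∃ y, F (x, y) = c)
    (hranky : ∀ x y, clmRank (fderiv ℝ (fun y' => F (x, y')) y) = r)
    (hrank : ∀ x y, clmRank (fderiv ℝ F (x, y)) = r)
    (x₀ : EuclideanSpace ℝ (Fin m)) (y₀ : EuclideanSpace ℝ (Fin n))
    (hsol : F (x₀, y₀) = c)
    -- `H` is the least-squares solution map of `F` at `(x₀, y₀)`:
    (Xh : Set (EuclideanSpace ℝ (Fin m))) (Yh : Set (EuclideanSpace ℝ (Fin n)))
    (H : EuclideanSpace ℝ (Fin m) → EuclideanSpace ℝ (Fin n))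
    (hXh : IsOpen Xh) (hx₀ : x₀ ∈ Xh) (hYh : IsOpen Yh) (hy₀ : y₀ ∈ Yh)
    (hH : ContDiffOn ℝ ((⊤ : ℕ∞) : WithTop ℕ∞) H Xh) (hHx₀ : H x₀ = y₀)
    (hLS : ∀ x ∈ Xh, H x ∈ Yh ∧ F (x, H x) = c ∧
      ∀ y ∈ Yh, F (x, y) = c → ‖H x - y₀‖ ≤ ‖y - y₀‖) :
    ((fderiv ℝ (fun y' => F (x₀, y')) y₀).comp (fderiv ℝ H x₀) =
        -(fderiv ℝ (fun x' => F (x', y₀)) x₀) ∧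
      ∀ v, fderiv ℝ H x₀ v ∈ (LinearMap.ker ((fderiv ℝ (fun y' => F (x₀, y')) y₀ :
        EuclideanSpace ℝ (Fin n) →ₗ[ℝ] EuclideanSpace ℝ (Fin p))))ᗮ) ∧
    ∀ M : EuclideanSpace ℝ (Fin m) →L[ℝ] EuclideanSpace ℝ (Fin n),
      (fderiv ℝ (fun y' => F (x₀, y')) y₀).comp M =
        -(fderiv ℝ (fun x' => F (x', y₀)) x₀) →
      (∀ v, M v ∈ (LinearMap.ker ((fderiv ℝ (fun y' => F (x₀, y')) y₀ :
        EuclideanSpace ℝ (Fin n) →ₗ[ℝ] EuclideanSpace ℝ (Fin p))))ᗮ) →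
      M = fderiv ℝ H x₀ := by
  classical
  have hone : (1 : WithTop ℕ∞) ≤ ((⊤ : ℕ∞) : WithTop ℕ∞) := by
    exact_mod_cast le_top
  have hFd : Differentiable ℝ F := hF.differentiable (by simp)
  set A := fderiv ℝ (fun y' => F (x₀, y')) y₀ with hA
  set B := fderiv ℝ (fun x' => F (x', y₀)) x₀ with hB
  set DF₀ := fderiv ℝ F (x₀, y₀) with hDF₀
  -- A = DF₀ ∘ inr, B = DF₀ ∘ inl
  have hinr : HasFDerivAt (fun y' => F (x₀, y'))
      (DF₀.comp (ContinuousLinearMap.inr ℝ _ _)) y₀ :=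
    (hFd (x₀, y₀)).hasFDerivAt.comp y₀ (hasFDerivAt_prodMk_right x₀ y₀)
  have hinl : HasFDerivAt (fun x' => F (x', y₀))
      (DF₀.comp (ContinuousLinearMap.inl ℝ _ _)) x₀ :=
    (hFd (x₀, y₀)).hasFDerivAt.comp x₀ (hasFDerivAt_prodMk_left x₀ y₀)
  have hAeq : A = DF₀.comp (ContinuousLinearMap.inr ℝ _ _) := hinr.fderiv
  have hBeq : B = DF₀.comp (ContinuousLinearMap.inl ℝ _ _) := hinl.fderiv
  have hDFsplit : ∀ (u : EuclideanSpace ℝ (Fin m)) (w : EuclideanSpace ℝ (Fin n)),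
      DF₀ (u, w) = B u + A w := by
    intro u w
    rw [hAeq, hBeq]
    have h1 : (u, w) = (u, 0) + (0, w) := by simp
    rw [show DF₀ (u, w) = DF₀ ((u, 0) + (0, w)) from by rw [← h1], map_add]
    rfl
  -- H is differentiable at x₀
  have hHdiff : DifferentiableAt ℝ H x₀ :=
    (hH.contDiffAt (hXh.mem_nhds hx₀)).differentiableAt (by simp)
  set DH := fderiv ℝ H x₀ with hDH
  -- Part 1a
  have hφ : HasFDerivAt (fun x => F (x, H x))
      (DF₀.comp ((ContinuousLinearMap.id ℝ _).prod DH)) x₀ := by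
    have h1 : HasFDerivAt (fun x => (x, H x)) ((ContinuousLinearMap.id ℝ _).prod DH) x₀ :=
      (hasFDerivAt_id x₀).prodMk hHdiff.hasFDerivAt
    have h2 : HasFDerivAt F DF₀ (x₀, H x₀) := by rw [hHx₀]; exact (hFd _).hasFDerivAt
    exact h2.comp x₀ h1
  have hφ0 : HasFDerivAt (fun x => F (x, H x)) (0 : EuclideanSpace ℝ (Fin m) →L[ℝ] EuclideanSpace ℝ (Fin p)) x₀ := by
    have hc : (fun x => F (x, H x)) =ᶠ[𝓝 x₀] fun _ => c := by
      filter_upwards [hXh.mem_nhds hx₀] with x hx using (hLS x hx).2.1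
    exact (hasFDerivAt_const c x₀).congr_of_eventuallyEq hc
  have hcomp0 : DF₀.comp ((ContinuousLinearMap.id ℝ _).prod DH) = 0 := hφ.unique hφ0
  have hADH : ∀ u, A (DH u) = - B u := by
    intro u
    have h := ContinuousLinearMap.ext_iff.mp hcomp0 u
    have h2 : DF₀ (u, DH u) = 0 := h
    rw [hDFsplit] at h2
    exact eq_neg_of_add_eq_zero_right h2
  have part1a : A.comp DH = -B := by
    apply ContinuousLinearMap.ext
    intro u
    rw [ContinuousLinearMap.comp_apply, ContinuousLinearMap.neg_apply]
    exact hADH u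
  set K := LinearMap.ker (A : EuclideanSpace ℝ (Fin n) →ₗ[ℝ] EuclideanSpace ℝ (Fin p)) with hK
  set R := LinearMap.range (A : EuclideanSpace ℝ (Fin n) →ₗ[ℝ] EuclideanSpace ℝ (Fin p)) with hR
  -- dimension bookkeeping
  have hrR : finrank ℝ R = r := by
    have h := hranky x₀ y₀
    unfold clmRank at h
    rw [← hA] at h
    exact h
  have hrDF : finrank ℝ (LinearMap.range (DF₀ : EuclideanSpace ℝ (Fin m) × EuclideanSpace ℝ (Fin n) →ₗ[ℝ] EuclideanSpace ℝ (Fin p))) = r := by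
    have h := hrank x₀ y₀
    unfold clmRank at h
    rw [← hDF₀] at h
    exact h
  have hAl : LinearMap.range ((A : EuclideanSpace ℝ (Fin n) →ₗ[ℝ] EuclideanSpace ℝ (Fin p))) = R := rfl
  have hAk : LinearMap.ker ((A : EuclideanSpace ℝ (Fin n) →ₗ[ℝ] EuclideanSpace ℝ (Fin p))) = K := rfl
  have hnn := (A : EuclideanSpace ℝ (Fin n) →ₗ[ℝ] EuclideanSpace ℝ (Fin p)).finrank_range_add_finrank_ker
  rw [hAl, hAk] at hnn
  have hYdim : finrank ℝ (EuclideanSpace ℝ (Fin n)) = n := finrank_euclideanSpace_fin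
  have horth := K.finrank_add_finrank_orthogonal
  have hKperp : finrank ℝ (Kᗮ) = r := by
    rw [hYdim] at hnn horth
    omega
  -- range DF₀ = R
  have hAu : ∀ w, A w = DF₀ (0, w) := by
    intro w
    rw [hDFsplit 0 w, map_zero, zero_add]
  have hReqDF : R = LinearMap.range (DF₀ : EuclideanSpace ℝ (Fin m) × EuclideanSpace ℝ (Fin n) →ₗ[ℝ] EuclideanSpace ℝ (Fin p)) := by
    apply Submodule.eq_of_le_of_finrank_le
    · rintro z ⟨w, rfl⟩
      exact ⟨(0, w), (hAu w).symm⟩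
    · rw [hrR, hrDF]
  -- the linear equivalence e : Kᗮ ≃ R
  let φ : Kᗮ →ₗ[ℝ] R :=
    ((A : EuclideanSpace ℝ (Fin n) →ₗ[ℝ] EuclideanSpace ℝ (Fin p)).domRestrict Kᗮ).codRestrict R (fun x => LinearMap.mem_range_self _ _)
  have hφdef : ∀ x : Kᗮ, (φ x : EuclideanSpace ℝ (Fin p)) = A (x : _) := fun _ => rfl
  have hφinj : Function.Injective φ := by
    intro a b hab
    have h1 : A ((a : EuclideanSpace ℝ (Fin n)) - (b : EuclideanSpace ℝ (Fin n))) = 0 := by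
      rw [map_sub, sub_eq_zero]
      rw [← hφdef, ← hφdef, hab]
    have h2 : ((a : EuclideanSpace ℝ (Fin n)) - (b : EuclideanSpace ℝ (Fin n))) ∈ K := h1
    have h3 : ((a : EuclideanSpace ℝ (Fin n)) - (b : EuclideanSpace ℝ (Fin n))) ∈ Kᗮ :=
      sub_mem a.2 b.2
    have h4 := Submodule.disjoint_def.mp K.orthogonal_disjoint _ h2 h3
    exact Subtype.ext (sub_eq_zero.mp h4)
  have hφsurj : Function.Surjective φ := by
    exact (LinearMap.injective_iff_surjective_of_finrank_eq_finrank
      (f := φ) (by rw [hKperp, hrR])).mp hφinj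
  let e := LinearEquiv.ofBijective φ ⟨hφinj, hφsurj⟩
  let S : EuclideanSpace ℝ (Fin p) →L[ℝ] EuclideanSpace ℝ (Fin n) :=
    LinearMap.toContinuousLinearMap
      ((Kᗮ).subtype ∘ₗ e.symm.toLinearMap ∘ₗ (Submodule.orthogonalProjectionOnto R).toLinearMap)
  have hSdef : ∀ ξ, S ξ = ((e.symm (Submodule.orthogonalProjectionOnto R ξ) : Kᗮ) : EuclideanSpace ℝ (Fin n)) :=
    fun _ => rfl
  set Pk : EuclideanSpace ℝ (Fin n) →L[ℝ] EuclideanSpace ℝ (Fin n) :=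
    K.subtypeL.comp (Submodule.orthogonalProjectionOnto K) with hPk
  have hPkdef : ∀ y, Pk y = ((Submodule.orthogonalProjectionOnto K y : K) : EuclideanSpace ℝ (Fin n)) :=
    fun _ => rfl
  have hPkmem : ∀ y, Pk y ∈ K := fun y => (Submodule.orthogonalProjectionOnto K y).2
  have hQmem : ∀ y, y - Pk y ∈ Kᗮ := fun y => Submodule.sub_starProjection_mem_orthogonal (K := K) y
  have hSmem : ∀ ξ, S ξ ∈ Kᗮ := fun ξ => (e.symm _).2
  have hSA : ∀ y, S (A y) = y - Pk y := by
    intro y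
    have hAy : A y = A (y - Pk y) := by
      have hz : A (Pk y) = 0 := hPkmem y
      rw [map_sub, hz, sub_zero]
    have hproj : Submodule.orthogonalProjectionOnto R (A y) = φ ⟨y - Pk y, hQmem y⟩ := by
      apply Subtype.ext
      rw [hφdef]
      have : A y ∈ R := LinearMap.mem_range_self _ _
      rw [show ((Submodule.orthogonalProjectionOnto R (A y) : EuclideanSpace ℝ (Fin p))) = A y from Submodule.starProjection_eq_self_iff.mpr this]
      exact hAy
    rw [hSdef, hproj]
    have : e.symm (φ ⟨y - Pk y, hQmem y⟩) = ⟨y - Pk y, hQmem y⟩ := by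
      have he : φ ⟨y - Pk y, hQmem y⟩ = e ⟨y - Pk y, hQmem y⟩ := rfl
      rw [he, LinearEquiv.symm_apply_apply]
    rw [this]
  have hS0 : ∀ ξ, S ξ = 0 → Submodule.orthogonalProjectionOnto R ξ = 0 := by
    intro ξ h
    rw [hSdef] at h
    have h1 : e.symm (Submodule.orthogonalProjectionOnto R ξ) = 0 := by
      exact Subtype.ext h
    have := e.symm.injective (by rw [h1, map_zero] : e.symm (Submodule.orthogonalProjectionOnto R ξ) = e.symm 0)
    exact this
  -- THE CORE: DH v ∈ Kᗮ for every v
  have hcore : ∀ v, DH v ∈ Kᗮ := by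
    intro v
    set w := DH v with hw
    set k := Pk w with hk
    set av := S (B v) with hav
    set ιL : ℝ × EuclideanSpace ℝ (Fin n) →L[ℝ]
        EuclideanSpace ℝ (Fin m) × EuclideanSpace ℝ (Fin n) :=
      ((ContinuousLinearMap.fst ℝ ℝ (EuclideanSpace ℝ (Fin n))).smulRight v).prod
        (ContinuousLinearMap.snd ℝ ℝ (EuclideanSpace ℝ (Fin n))) with hιL
    set ι : ℝ × EuclideanSpace ℝ (Fin n) → EuclideanSpace ℝ (Fin m) × EuclideanSpace ℝ (Fin n) :=
      fun q => (x₀ + q.1 • v, y₀ + q.2) with hι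
    have hι0 : ι (0, 0) = (x₀, y₀) := by simp [hι]
    have hιd : ∀ q, HasFDerivAt ι ιL q := by
      intro q
      exact (ιL.hasFDerivAt (x := q)).const_add ((x₀, y₀))
    set Φ : ℝ × EuclideanSpace ℝ (Fin n) → ℝ × EuclideanSpace ℝ (Fin n) :=
      fun q => (q.1, Pk q.2 + S (F (ι q) - c)) with hΦdef
    have hΦcd : ContDiff ℝ ((⊤ : ℕ∞) : WithTop ℕ∞) Φ := by
      refine ContDiff.prodMk contDiff_fst ?_
      refine ContDiff.add (Pk.contDiff.comp contDiff_snd) ?_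
      refine S.contDiff.comp (ContDiff.sub ?_ contDiff_const)
      refine hF.comp (ContDiff.prodMk ?_ ?_)
      · exact contDiff_const.add (contDiff_fst.smul contDiff_const)
      · exact contDiff_const.add contDiff_snd
    set eΦ : (ℝ × EuclideanSpace ℝ (Fin n)) ≃L[ℝ] (ℝ × EuclideanSpace ℝ (Fin n)) :=
      ContinuousLinearEquiv.equivOfInverse
        ((ContinuousLinearMap.fst ℝ ℝ (EuclideanSpace ℝ (Fin n))).prod
          ((ContinuousLinearMap.snd ℝ ℝ (EuclideanSpace ℝ (Fin n))) +
            (ContinuousLinearMap.fst ℝ ℝ (EuclideanSpace ℝ (Fin n))).smulRight av))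
        ((ContinuousLinearMap.fst ℝ ℝ (EuclideanSpace ℝ (Fin n))).prod
          ((ContinuousLinearMap.snd ℝ ℝ (EuclideanSpace ℝ (Fin n))) -
            (ContinuousLinearMap.fst ℝ ℝ (EuclideanSpace ℝ (Fin n))).smulRight av))
        (fun q => by
          apply Prod.ext <;>
            simp [ContinuousLinearMap.prod_apply, ContinuousLinearMap.smulRight_apply])
        (fun q => by
          apply Prod.ext <;>
            simp [ContinuousLinearMap.prod_apply, ContinuousLinearMap.smulRight_apply])
        with heΦ
    have hΦ0 : Φ (0, 0) = (0, 0) := by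
      rw [hΦdef]
      simp only [hι0]
      rw [hsol]
      simp
    have hΦ' : HasFDerivAt Φ (eΦ : _ →L[ℝ] _) ((0 : ℝ), (0 : EuclideanSpace ℝ (Fin n))) := by
      have hF' : HasFDerivAt F DF₀ (ι (0, 0)) := by rw [hι0]; exact (hFd _).hasFDerivAt
      have h2 : HasFDerivAt (fun q => F (ι q)) (DF₀.comp ιL) ((0 : ℝ), 0) :=
        hF'.comp _ (hιd _)
      have h3 : HasFDerivAt Φ
          ((ContinuousLinearMap.fst ℝ ℝ (EuclideanSpace ℝ (Fin n))).prod
            ((Pk.comp (ContinuousLinearMap.snd ℝ ℝ (EuclideanSpace ℝ (Fin n)))) +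
              S.comp (DF₀.comp ιL))) ((0 : ℝ), 0) := by
        refine HasFDerivAt.prodMk (hasFDerivAt_fst) ?_
        refine HasFDerivAt.add ?_ ?_
        · exact (Pk.comp (ContinuousLinearMap.snd ℝ ℝ (EuclideanSpace ℝ (Fin n)))).hasFDerivAt
        · exact S.hasFDerivAt.comp _ (h2.sub_const c)
      have hEq : (eΦ : (ℝ × EuclideanSpace ℝ (Fin n)) →L[ℝ] (ℝ × EuclideanSpace ℝ (Fin n))) =
          ((ContinuousLinearMap.fst ℝ ℝ (EuclideanSpace ℝ (Fin n))).prod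
            ((Pk.comp (ContinuousLinearMap.snd ℝ ℝ (EuclideanSpace ℝ (Fin n)))) +
              S.comp (DF₀.comp ιL))) := by
        apply ContinuousLinearMap.ext
        intro q
        apply Prod.ext
        · simp [heΦ]
        · show q.2 + q.1 • av = Pk q.2 + S (DF₀ (ιL q))
          have hιLq : ιL q = (q.1 • v, q.2) := rfl
          rw [hιLq, hDFsplit, map_add, hSA]
          have e1 : S (B ((q.1 : ℝ) • v)) = q.1 • av := by
            simp [hav, map_smul]
          rw [e1]
          abel
      rw [hEq]
      exact h3
    have hΦs : HasStrictFDerivAt Φ (eΦ : _ →L[ℝ] _) ((0 : ℝ), (0 : EuclideanSpace ℝ (Fin n))) :=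
      (hΦcd.contDiffAt).hasStrictFDerivAt' hΦ' (by simp)
    set Ψ : ℝ × EuclideanSpace ℝ (Fin n) → ℝ × EuclideanSpace ℝ (Fin n) :=
      hΦs.localInverse Φ eΦ ((0 : ℝ), (0 : EuclideanSpace ℝ (Fin n))) with hΨdef
    have hΨs : HasStrictFDerivAt Ψ ((eΦ.symm : _ →L[ℝ] _))
        ((0 : ℝ), (0 : EuclideanSpace ℝ (Fin n))) := by
      have := hΦs.to_localInverse
      rwa [hΦ0] at this
    have hΨcd : ContDiffAt ℝ ((⊤ : ℕ∞) : WithTop ℕ∞) Ψ ((0 : ℝ), (0 : EuclideanSpace ℝ (Fin n))) := by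
      have := hΦcd.contDiffAt.to_localInverse (f' := eΦ) hΦ' (by simp)
      rwa [hΦ0] at this
    have hrinv : ∀ᶠ q in 𝓝 ((0 : ℝ), (0 : EuclideanSpace ℝ (Fin n))), Φ (Ψ q) = q := by
      have := hΦs.eventually_right_inverse
      rwa [hΦ0] at this
    have hΨ00 : Ψ ((0 : ℝ), (0 : EuclideanSpace ℝ (Fin n))) = ((0 : ℝ), 0) := by
      have := hΦs.localInverse_apply_image
      rwa [hΦ0] at this
    set ρ : ℝ × EuclideanSpace ℝ (Fin n) →L[ℝ] ℝ × EuclideanSpace ℝ (Fin n) :=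
      (ContinuousLinearMap.fst ℝ ℝ (EuclideanSpace ℝ (Fin n))).prod
        (Pk.comp (ContinuousLinearMap.snd ℝ ℝ (EuclideanSpace ℝ (Fin n)))) with hρdef
    have hρ0 : ρ ((0 : ℝ), (0 : EuclideanSpace ℝ (Fin n))) = ((0 : ℝ), 0) := by
      have : ((0 : ℝ), (0 : EuclideanSpace ℝ (Fin n))) = (0 : ℝ × EuclideanSpace ℝ (Fin n)) := rfl
      rw [this, map_zero]
    set zt : ℝ × EuclideanSpace ℝ (Fin n) → EuclideanSpace ℝ (Fin n) :=
      fun q => (Ψ (ρ q)).2 with hztdef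
    set g : ℝ × EuclideanSpace ℝ (Fin n) → EuclideanSpace ℝ (Fin m) × EuclideanSpace ℝ (Fin n) :=
      fun q => (x₀ + q.1 • v, y₀ + zt q) with hgdef
    -- Ψ is differentiable on a neighborhood of (0,0)
    obtain ⟨t, htmem, htC⟩ := hΨcd.contDiffOn hone (by simp)
    obtain ⟨t', ht'sub, ht'open, ht'mem⟩ := mem_nhds_iff.mp htmem
    have hΨdOn : DifferentiableOn ℝ Ψ t' := (htC.mono ht'sub).differentiableOn one_ne_zero
    have hΨdiff : ∀ q ∈ t', DifferentiableAt ℝ Ψ q :=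
      fun q hq => (hΨdOn q hq).differentiableAt (ht'open.mem_nhds hq)
    -- the constant-rank stability neighborhood
    have hDcont : Continuous fun pt : EuclideanSpace ℝ (Fin m) × EuclideanSpace ℝ (Fin n) =>
        fderiv ℝ F pt := hF.continuous_fderiv (by simp)
    have hrk : ∀ pt : EuclideanSpace ℝ (Fin m) × EuclideanSpace ℝ (Fin n),
        finrank ℝ (LinearMap.range (fderiv ℝ F pt : EuclideanSpace ℝ (Fin m) × EuclideanSpace ℝ (Fin n) →ₗ[ℝ] EuclideanSpace ℝ (Fin p))) = r := by
      intro pt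
      have hh := hrank pt.1 pt.2
      unfold clmRank at hh
      simpa using hh
    have hUev := aux1 (fun pt : EuclideanSpace ℝ (Fin m) × EuclideanSpace ℝ (Fin n) =>
      fderiv ℝ F pt) hDcont r hrk (x₀, y₀)
    have hUev' : ∀ᶠ pt in 𝓝 (x₀, y₀), ∀ ξ,
        Submodule.orthogonalProjectionOnto (LinearMap.range (fderiv ℝ F (x₀, y₀) : EuclideanSpace ℝ (Fin m) × EuclideanSpace ℝ (Fin n) →ₗ[ℝ] EuclideanSpace ℝ (Fin p))) (fderiv ℝ F pt ξ) = 0 →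
          fderiv ℝ F pt ξ = 0 := hUev
    have hRR : R = LinearMap.range (fderiv ℝ F (x₀, y₀) : EuclideanSpace ℝ (Fin m) × EuclideanSpace ℝ (Fin n) →ₗ[ℝ] EuclideanSpace ℝ (Fin p)) := by rw [← hDF₀]; exact hReqDF
    have hS0' : ∀ ξ, S ξ = 0 →
        Submodule.orthogonalProjectionOnto (LinearMap.range (fderiv ℝ F (x₀, y₀) : EuclideanSpace ℝ (Fin m) × EuclideanSpace ℝ (Fin n) →ₗ[ℝ] EuclideanSpace ℝ (Fin p))) ξ = 0 := by
      intro ξ h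
      rw [Submodule.orthogonalProjectionOnto_eq_zero_iff]
      have h2 := hS0 ξ h
      rw [Submodule.orthogonalProjectionOnto_eq_zero_iff] at h2
      rw [← hRR]
      exact h2
    obtain ⟨U, hUP, hUopen, hUmem⟩ := eventually_nhds_iff.mp hUev'
    -- continuity facts at the base point
    have hΨconat : ContinuousAt Ψ ((0:ℝ), (0 : EuclideanSpace ℝ (Fin n))) :=
      hΨs.hasFDerivAt.differentiableAt.continuousAt
    have hzt0 : zt ((0:ℝ), (0 : EuclideanSpace ℝ (Fin n))) = 0 := by
      rw [hztdef]
      simp only [hρ0, hΨ00]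
    have hzt0z : zt (0 : ℝ × EuclideanSpace ℝ (Fin n)) = 0 := hzt0
    have hztcont : ContinuousAt zt ((0:ℝ), (0 : EuclideanSpace ℝ (Fin n))) := by
      have h1 : ContinuousAt (fun q => Ψ (ρ q)) ((0:ℝ), (0 : EuclideanSpace ℝ (Fin n))) := by
        apply ContinuousAt.comp
        · rw [hρ0]; exact hΨconat
        · exact ρ.continuous.continuousAt
      exact continuous_snd.continuousAt.comp h1
    have hg0 : g ((0:ℝ), (0 : EuclideanSpace ℝ (Fin n))) = (x₀, y₀) := by
      rw [hgdef]
      simp [hzt0, hzt0z]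
    have hgcont : ContinuousAt g ((0:ℝ), (0 : EuclideanSpace ℝ (Fin n))) := by
      apply ContinuousAt.prodMk
      · exact (continuous_const.add (continuous_fst.smul continuous_const)).continuousAt
      · exact continuousAt_const.add hztcont
    -- three eventual conditions
    have hev1 : ∀ᶠ q in 𝓝 ((0:ℝ), (0 : EuclideanSpace ℝ (Fin n))), ρ q ∈ t' :=
      (ρ.continuous.continuousAt).eventually_mem (ht'open.mem_nhds (by rw [hρ0]; exact ht'mem))
    have hev2 : ∀ᶠ q in 𝓝 ((0:ℝ), (0 : EuclideanSpace ℝ (Fin n))), Φ (Ψ (ρ q)) = ρ q := by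
      have h1 : Filter.Tendsto ρ (𝓝 ((0:ℝ), (0 : EuclideanSpace ℝ (Fin n))))
          (𝓝 ((0:ℝ), (0 : EuclideanSpace ℝ (Fin n)))) := by
        have := ρ.continuous.continuousAt (x := ((0:ℝ), (0 : EuclideanSpace ℝ (Fin n))))
        rwa [ContinuousAt, hρ0] at this
      exact h1.eventually hrinv
    have hev3 : ∀ᶠ q in 𝓝 ((0:ℝ), (0 : EuclideanSpace ℝ (Fin n))), g q ∈ U :=
      hgcont.eventually_mem (hUopen.mem_nhds (by rw [hg0]; exact hUmem))
    obtain ⟨ε, hε, hballsub⟩ :=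
      Metric.eventually_nhds_iff_ball.mp ((hev1.and hev2).and hev3)
    set Bε := Metric.ball ((0:ℝ), (0 : EuclideanSpace ℝ (Fin n))) ε with hBε
    have hBεmem : ((0:ℝ), (0 : EuclideanSpace ℝ (Fin n))) ∈ Bε := Metric.mem_ball_self hε
    -- S annihilates F ∘ g - c on the ball
    have hSh : ∀ q ∈ Bε, S (F (g q) - c) = 0 := by
      intro q hq
      obtain ⟨⟨h1, h2⟩, h3⟩ := hballsub q hq
      have hρq : ρ q = (q.1, Pk q.2) := rfl
      have hΦx : ∀ x, Φ x = (x.1, Pk x.2 + S (F (ι x) - c)) := fun _ => rfl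
      rw [hΦx, Prod.mk.injEq] at h2
      obtain ⟨hc1, hc2⟩ := h2
      rw [show (ρ q).1 = q.1 from rfl] at hc1
      rw [show (ρ q).2 = Pk q.2 from rfl] at hc2
      have hgq : ι (Ψ (ρ q)) = g q := by
        apply Prod.ext
        · show x₀ + (Ψ (ρ q)).1 • v = x₀ + q.1 • v
          rw [hc1]
        · rfl
      rw [hgq] at hc2
      have hSK : S (F (g q) - c) ∈ K := by
        have heq : S (F (g q) - c) = Pk q.2 - Pk ((Ψ (ρ q)).2) := by
          rw [← hc2]; abel
        rw [heq]
        exact sub_mem (hPkmem _) (hPkmem _)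
      exact Submodule.disjoint_def.mp K.orthogonal_disjoint _ hSK (hSmem _)
    have hPRh : ∀ q ∈ Bε,
        Submodule.orthogonalProjectionOnto (LinearMap.range (fderiv ℝ F (x₀, y₀) : EuclideanSpace ℝ (Fin m) × EuclideanSpace ℝ (Fin n) →ₗ[ℝ] EuclideanSpace ℝ (Fin p))) (F (g q) - c) = 0 :=
      fun q hq => hS0' _ (hSh q hq)
    -- g has a derivative at every point of the ball
    have hgd : ∀ q ∈ Bε, HasFDerivAt g
        (((ContinuousLinearMap.fst ℝ ℝ (EuclideanSpace ℝ (Fin n))).smulRight v).prod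
          ((ContinuousLinearMap.snd ℝ ℝ (EuclideanSpace ℝ (Fin n))).comp
            ((fderiv ℝ Ψ (ρ q)).comp ρ))) q := by
      intro q hq
      obtain ⟨⟨h1, _⟩, _⟩ := hballsub q hq
      have hΨq : HasFDerivAt Ψ (fderiv ℝ Ψ (ρ q)) (ρ q) := (hΨdiff _ h1).hasFDerivAt
      have hcomp1 : HasFDerivAt (fun q' => Ψ (ρ q')) ((fderiv ℝ Ψ (ρ q)).comp ρ) q :=
        hΨq.comp q (ρ.hasFDerivAt)
      have hzt' : HasFDerivAt zt
          ((ContinuousLinearMap.snd ℝ ℝ (EuclideanSpace ℝ (Fin n))).comp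
            ((fderiv ℝ Ψ (ρ q)).comp ρ)) q :=
        ((ContinuousLinearMap.snd ℝ ℝ (EuclideanSpace ℝ (Fin n))).hasFDerivAt).comp q hcomp1
      refine HasFDerivAt.prodMk ?_ ?_
      · exact (((ContinuousLinearMap.fst ℝ ℝ
          (EuclideanSpace ℝ (Fin n))).smulRight v).hasFDerivAt).const_add x₀
      · exact hzt'.const_add y₀
    -- F ∘ g - c has vanishing derivative on the ball
    have hfz : ∀ q ∈ Bε, HasFDerivAt (fun q' => F (g q') - c)
        (0 : ℝ × EuclideanSpace ℝ (Fin n) →L[ℝ] EuclideanSpace ℝ (Fin p)) q := by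
      intro q hq
      set Gq := ((ContinuousLinearMap.fst ℝ ℝ (EuclideanSpace ℝ (Fin n))).smulRight v).prod
          ((ContinuousLinearMap.snd ℝ ℝ (EuclideanSpace ℝ (Fin n))).comp
            ((fderiv ℝ Ψ (ρ q)).comp ρ)) with hGq
      have hband : HasFDerivAt (fun q' => F (g q') - c) ((fderiv ℝ F (g q)).comp Gq) q :=
        ((hFd (g q)).hasFDerivAt.comp q (hgd q hq)).sub_const c
      have hzero : HasFDerivAt (fun q' =>
            Submodule.orthogonalProjectionOnto (LinearMap.range (fderiv ℝ F (x₀, y₀) : EuclideanSpace ℝ (Fin m) × EuclideanSpace ℝ (Fin n) →ₗ[ℝ] EuclideanSpace ℝ (Fin p))) (F (g q') - c))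
          (0 : ℝ × EuclideanSpace ℝ (Fin n) →L[ℝ] (LinearMap.range (fderiv ℝ F (x₀, y₀) : EuclideanSpace ℝ (Fin m) × EuclideanSpace ℝ (Fin n) →ₗ[ℝ] EuclideanSpace ℝ (Fin p)))) q := by
        refine (hasFDerivAt_const (0 : (LinearMap.range (fderiv ℝ F (x₀, y₀) : EuclideanSpace ℝ (Fin m) × EuclideanSpace ℝ (Fin n) →ₗ[ℝ] EuclideanSpace ℝ (Fin p)))) q).congr_of_eventuallyEq ?_
        filter_upwards [Metric.isOpen_ball.mem_nhds hq] with q' hq'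
        exact hPRh q' hq'
      have hcomp : HasFDerivAt (fun q' =>
            Submodule.orthogonalProjectionOnto (LinearMap.range (fderiv ℝ F (x₀, y₀) : EuclideanSpace ℝ (Fin m) × EuclideanSpace ℝ (Fin n) →ₗ[ℝ] EuclideanSpace ℝ (Fin p))) (F (g q') - c))
          ((Submodule.orthogonalProjectionOnto (LinearMap.range (fderiv ℝ F (x₀, y₀) : EuclideanSpace ℝ (Fin m) × EuclideanSpace ℝ (Fin n) →ₗ[ℝ] EuclideanSpace ℝ (Fin p)))).comp
            ((fderiv ℝ F (g q)).comp Gq)) q :=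
        ((Submodule.orthogonalProjectionOnto (LinearMap.range (fderiv ℝ F (x₀, y₀) : EuclideanSpace ℝ (Fin m) × EuclideanSpace ℝ (Fin n) →ₗ[ℝ] EuclideanSpace ℝ (Fin p)))).hasFDerivAt).comp q hband
      have hPR0 := hcomp.unique hzero
      have hDzero : (fderiv ℝ F (g q)).comp Gq = 0 := by
        apply ContinuousLinearMap.ext
        intro ζ
        obtain ⟨_, h3⟩ := hballsub q hq
        have h4 := ContinuousLinearMap.ext_iff.mp hPR0 ζ
        rw [ContinuousLinearMap.comp_apply, ContinuousLinearMap.comp_apply] at h4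
        rw [ContinuousLinearMap.zero_apply] at h4 ⊢
        rw [ContinuousLinearMap.comp_apply]
        exact hUP (g q) h3 (Gq ζ) h4
      rw [← hDzero]
      exact hband
    -- hence F ∘ g = c on the ball
    have key : ∀ q ∈ Bε, F (g q) = c := by
      intro q hq
      have hdOn : DifferentiableOn ℝ (fun q' => F (g q') - c) Bε :=
        fun q' hq' => ((hfz q' hq').differentiableAt).differentiableWithinAt
      have hbound : ∀ q' ∈ Bε, ‖fderivWithin ℝ (fun q'' => F (g q'') - c) Bε q'‖ ≤ 0 := by
        intro q' hq'
        rw [fderivWithin_of_isOpen Metric.isOpen_ball hq', (hfz q' hq').fderiv]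
        simp
      have hle := (convex_ball _ _).norm_image_sub_le_of_norm_fderivWithin_le
        hdOn hbound hBεmem hq
      rw [zero_mul] at hle
      have h0 : F (g ((0:ℝ), (0 : EuclideanSpace ℝ (Fin n)))) - c = 0 := by
        rw [hg0, hsol, sub_self]
      have h' := norm_le_zero_iff.mp hle
      rw [h0, sub_zero] at h'
      exact sub_eq_zero.mp h'
    -- the two curves
    have h00 : x₀ + (0:ℝ) • v = x₀ := by simp
    have hxd : HasDerivAt (fun t : ℝ => x₀ + t • v) v 0 := by
      have h1 : HasDerivAt (fun t : ℝ => t • v) ((1:ℝ) • v) 0 := (hasDerivAt_id (0:ℝ)).smul_const v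
      rw [one_smul] at h1
      exact h1.const_add x₀
    have hγ₁d : HasDerivAt (fun t : ℝ => H (x₀ + t • v)) w 0 := by
      have hH' : HasFDerivAt H DH (x₀ + (0:ℝ) • v) := by rw [h00]; exact hHdiff.hasFDerivAt
      exact hH'.comp_hasDerivAt 0 hxd
    have hγ₁0 : (fun t : ℝ => H (x₀ + t • v)) 0 = y₀ := by simp [hHx₀]
    set σ : ℝ → ℝ × EuclideanSpace ℝ (Fin n) :=
      fun t => (t, H (x₀ + t • v) - y₀ - t • k) with hσdef
    have hσ0 : σ 0 = ((0:ℝ), (0 : EuclideanSpace ℝ (Fin n))) := by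
      rw [hσdef]
      simp [hHx₀]
    have hkd : HasDerivAt (fun t : ℝ => t • k) k 0 := by
      have h1 : HasDerivAt (fun t : ℝ => t • k) ((1:ℝ) • k) 0 := (hasDerivAt_id (0:ℝ)).smul_const k
      rwa [one_smul] at h1
    have hσd : HasDerivAt σ ((1:ℝ), w - y₀ + y₀ - k) 0 := by
      refine HasDerivAt.prodMk (hasDerivAt_id 0) ?_
      have := (hγ₁d.sub_const y₀).sub hkd
      convert this using 1
      · rfl
      · rw [sub_add_cancel]
    have hσd' : HasDerivAt σ ((1:ℝ), w - k) 0 := by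
      have : w - y₀ + y₀ - k = w - k := by abel
      rwa [this] at hσd
    have hσcont : ContinuousAt σ 0 := hσd'.continuousAt
    set yhat : ℝ → EuclideanSpace ℝ (Fin n) := fun t => y₀ + zt (σ t) with hyhatdef
    have hyev : ∀ᶠ t in 𝓝 (0:ℝ), σ t ∈ Bε :=
      hσcont.eventually_mem (Metric.isOpen_ball.mem_nhds (by rw [hσ0]; exact hBεmem))
    have hyF : ∀ᶠ t in 𝓝 (0:ℝ), F (x₀ + t • v, yhat t) = c := by
      filter_upwards [hyev] with t ht
      have hkey := key (σ t) ht
      have hgσ : g (σ t) = (x₀ + t • v, yhat t) := rfl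
      rwa [hgσ] at hkey
    have hyhat0 : yhat 0 = y₀ := by
      rw [hyhatdef]
      have hz : zt (σ 0) = 0 := by rw [hσ0]; exact hzt0
      simp [hz]
    have hyhatcont : ContinuousAt yhat 0 := by
      have hztσ : ContinuousAt zt (σ 0) := by rw [hσ0]; exact hztcont
      have h2 : ContinuousAt (fun t => zt (σ t)) 0 := hztσ.comp hσcont
      exact continuousAt_const.add h2
    have hyYh : ∀ᶠ t in 𝓝 (0:ℝ), yhat t ∈ Yh :=
      hyhatcont.eventually_mem (hYh.mem_nhds (by rw [hyhat0]; exact hy₀))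
    have hxXh : ∀ᶠ t in 𝓝 (0:ℝ), x₀ + t • v ∈ Xh :=
      hxd.continuousAt.eventually_mem (hXh.mem_nhds (by rw [h00]; exact hx₀))
    have hcompare : ∀ᶠ t in 𝓝 (0:ℝ), ‖H (x₀ + t • v) - y₀‖ ≤ ‖yhat t - y₀‖ := by
      filter_upwards [hyF, hyYh, hxXh] with t h1 h2 h3
      exact (hLS _ h3).2.2 _ h2 h1
    -- derivative of yhat at 0
    have hΨfd : HasFDerivAt Ψ ((eΦ.symm : _ →L[ℝ] _))
        ((0:ℝ), (0 : EuclideanSpace ℝ (Fin n))) := hΨs.hasFDerivAt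
    have hc1 : HasFDerivAt (fun q => Ψ (ρ q))
        (((eΦ.symm : ℝ × EuclideanSpace ℝ (Fin n) →L[ℝ] ℝ × EuclideanSpace ℝ (Fin n))).comp ρ)
        ((0:ℝ), (0 : EuclideanSpace ℝ (Fin n))) := by
      have hΨ' : HasFDerivAt Ψ
          ((eΦ.symm : ℝ × EuclideanSpace ℝ (Fin n) →L[ℝ] ℝ × EuclideanSpace ℝ (Fin n)))
          (ρ ((0:ℝ), (0 : EuclideanSpace ℝ (Fin n)))) := by rw [hρ0]; exact hΨfd
      exact hΨ'.comp _ (ρ.hasFDerivAt)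
    have hztd : HasFDerivAt zt
        ((ContinuousLinearMap.snd ℝ ℝ (EuclideanSpace ℝ (Fin n))).comp
          (((eΦ.symm : ℝ × EuclideanSpace ℝ (Fin n) →L[ℝ] ℝ × EuclideanSpace ℝ (Fin n))).comp ρ))
        ((0:ℝ), (0 : EuclideanSpace ℝ (Fin n))) :=
      ((ContinuousLinearMap.snd ℝ ℝ (EuclideanSpace ℝ (Fin n))).hasFDerivAt).comp _ hc1
    have hztd' : HasFDerivAt zt
        ((ContinuousLinearMap.snd ℝ ℝ (EuclideanSpace ℝ (Fin n))).comp
          (((eΦ.symm : ℝ × EuclideanSpace ℝ (Fin n) →L[ℝ] ℝ × EuclideanSpace ℝ (Fin n))).comp ρ))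
        (σ 0) := by rw [hσ0]; exact hztd
    have hyhd : HasDerivAt yhat
        (((ContinuousLinearMap.snd ℝ ℝ (EuclideanSpace ℝ (Fin n))).comp
          (((eΦ.symm : ℝ × EuclideanSpace ℝ (Fin n) →L[ℝ] ℝ × EuclideanSpace ℝ (Fin n))).comp ρ))
            ((1:ℝ), w - k)) 0 := by
      have h2 := hztd'.comp_hasDerivAt 0 hσd'
      exact h2.const_add y₀
    -- compute the derivative value
    have hPkk : Pk k = k := by
      rw [hk]
      exact Submodule.starProjection_eq_self_iff.mpr (hPkmem w)
    have hρval : ρ ((1:ℝ), w - k) = ((1:ℝ), (0 : EuclideanSpace ℝ (Fin n))) := by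
      apply Prod.ext
      · rfl
      · show Pk (w - k) = 0
        rw [map_sub, hPkk, hk, sub_self]
    have hBvAw : B v = - A w := by
      rw [hADH v]
      simp
    have havwk : av = k - w := by
      rw [hav, hBvAw, map_neg, hSA, hk, neg_sub]
    have hsymm : (eΦ.symm : ℝ × EuclideanSpace ℝ (Fin n) →L[ℝ] ℝ × EuclideanSpace ℝ (Fin n)) =
        ((ContinuousLinearMap.fst ℝ ℝ (EuclideanSpace ℝ (Fin n))).prod
          ((ContinuousLinearMap.snd ℝ ℝ (EuclideanSpace ℝ (Fin n))) -
            (ContinuousLinearMap.fst ℝ ℝ (EuclideanSpace ℝ (Fin n))).smulRight av)) := by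
      rw [heΦ, ContinuousLinearEquiv.symm_equivOfInverse]
      rfl
    have hval : ((ContinuousLinearMap.snd ℝ ℝ (EuclideanSpace ℝ (Fin n))).comp
          (((eΦ.symm : ℝ × EuclideanSpace ℝ (Fin n) →L[ℝ] ℝ × EuclideanSpace ℝ (Fin n))).comp ρ))
            ((1:ℝ), w - k) = w - k := by
      rw [ContinuousLinearMap.comp_apply, ContinuousLinearMap.comp_apply, hρval, hsymm]
      show ((1:ℝ), (0 : EuclideanSpace ℝ (Fin n))).2 - (1:ℝ) • av = w - k
      rw [havwk, one_smul]
      show (0 : EuclideanSpace ℝ (Fin n)) - (k - w) = w - k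
      abel
    have hyhd' : HasDerivAt yhat (w - k) 0 := by rwa [hval] at hyhd
    -- comparison of norms of derivatives
    have hnle : ‖w‖ ≤ ‖w - k‖ := aux2 hγ₁d hyhd' hγ₁0 hyhat0 hcompare
    -- Pythagoras
    have hkK : k ∈ K := by rw [hk]; exact hPkmem w
    have hwk : w - k ∈ Kᗮ := by rw [hk]; exact hQmem w
    have hinner : (inner ℝ k (w - k) : ℝ) = 0 := (Submodule.mem_orthogonal K (w - k)).mp hwk k hkK
    have hsq : ‖w‖^2 = ‖k‖^2 + ‖w - k‖^2 := by
      have hdecomp : w = k + (w - k) := by abel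
      calc ‖w‖^2 = ‖k + (w - k)‖^2 := by rw [← hdecomp]
        _ = ‖k‖^2 + 2 * (inner ℝ k (w - k) : ℝ) + ‖w - k‖^2 := norm_add_sq_real _ _
        _ = ‖k‖^2 + ‖w - k‖^2 := by rw [hinner]; ring
    have hk2 : ‖k‖ ^ 2 = 0 := by
      have h2 : ‖w‖^2 ≤ ‖w - k‖^2 := pow_le_pow_left₀ (norm_nonneg _) hnle 2
      have h3 : ‖k‖^2 ≤ 0 := by linarith
      exact le_antisymm h3 (sq_nonneg _)
    have hk0 : k = 0 := by
      have h4 : ‖k‖ = 0 := by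
        have := sq_eq_zero_iff.mp hk2
        exact this
      exact norm_eq_zero.mp h4
    have hproj0 : Submodule.orthogonalProjectionOnto K w = 0 := by
      have hcoe : ((Submodule.orthogonalProjectionOnto K w : K) : EuclideanSpace ℝ (Fin n)) = 0 := by
        rw [← hPkdef w]
        rw [← hk]
        exact hk0
      exact_mod_cast hcoe
    exact Submodule.orthogonalProjectionOnto_eq_zero_iff.mp hproj0
  refine ⟨⟨part1a, hcore⟩, ?_⟩
  intro M hM1 hM2
  apply ContinuousLinearMap.ext
  intro u
  have hdiff0 : A (M u - DH u) = 0 := by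
    rw [map_sub]
    have h1 := ContinuousLinearMap.ext_iff.mp hM1 u
    rw [ContinuousLinearMap.comp_apply, ContinuousLinearMap.neg_apply] at h1
    rw [h1, hADH u, sub_self]
  have hker : M u - DH u ∈ K := hdiff0
  have hperp : M u - DH u ∈ Kᗮ := sub_mem (hM2 u) (hcore u)
  have h0 := Submodule.disjoint_def.mp K.orthogonal_disjoint _ hker hperp
  exact sub_eq_zero.mp h0
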